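/- Let m ≥ 1 and 1 ≤ k ≤ m. The combinatorial matrix M_{[m,k]} ∈ ℝ^{m × C(m,k)}, whose columns are all 0-1 vectors with exactly k ones, maps the standard probability simplex Δ ⊂ ℝ^{C(m,k)} onto the polytope {α ∈ ℝ^m : 0 ≤ α_i ≤ 1 for all i, Σ_i α_i = k}. That is, for every α in this polytope there exists a probability vector p with M_{[m,k]} p = α. -/

import Mathlib

open Finset

private lemma stmt2_base (m k : ℕ) (α : Fin m → ℝ)
    (h01 : ∀ i, α i = 0 ∨ α i = 1) (hsum : ∑ i, α i = k) :
    ∃ p : {S : Finset (Fin m) // S.card = k} → ℝ,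
      (∀ S, 0 ≤ p S) ∧ (∑ S, p S = 1) ∧
      ∀ i, (∑ S : {S : Finset (Fin m) // S.card = k},
        p S * (if i ∈ S.1 then (1 : ℝ) else 0)) = α i := by
  set S : Finset (Fin m) := Finset.univ.filter (fun i => α i = 1) with hS
  have hcard : S.card = k := by
    have : (S.card : ℝ) = k := by
      rw [← hsum, hS, Finset.card_filter]
      push_cast
      refine Finset.sum_congr rfl (fun i _ => ?_)
      rcases h01 i with h | h <;> simp [h]
    exact_mod_cast this
  have key : ∀ T : {S : Finset (Fin m) // S.card = k},
      (T.1 = S) ↔ (T = ⟨S, hcard⟩) := by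
    intro T; simp [Subtype.ext_iff]
  refine ⟨fun T => if T.1 = S then 1 else 0, ?_, ?_, ?_⟩
  · intro T; by_cases h : T.1 = S <;> simp [h]
  · simp only [key]
    simp
  · intro i
    simp only [key]
    rw [Finset.sum_eq_single (⟨S, hcard⟩ : {S : Finset (Fin m) // S.card = k})]
    · rcases h01 i with h | h
      · have : i ∉ S := by simp [hS, h]
        simp [this, h]
      · have : i ∈ S := by simp [hS, h]
        simp [this, h]
    · intro b _ hb; simp [hb]
    · intro h; exact absurd (Finset.mem_univ _) h

private lemma stmt2_aux (m k : ℕ) :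
    ∀ n (α : Fin m → ℝ), (∀ i, 0 ≤ α i ∧ α i ≤ 1) → (∑ i, α i = k) →
      ((Finset.univ.filter (fun i => α i ≠ 0 ∧ α i ≠ 1)).card ≤ n) →
      ∃ p : {S : Finset (Fin m) // S.card = k} → ℝ,
        (∀ S, 0 ≤ p S) ∧ (∑ S, p S = 1) ∧
        ∀ i, (∑ S : {S : Finset (Fin m) // S.card = k},
          p S * (if i ∈ S.1 then (1 : ℝ) else 0)) = α i := by
  intro n
  induction n with
  | zero =>
    intro α hα hsum hcard
    apply stmt2_base m k α _ hsum
    intro i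
    by_contra h
    push_neg at h
    have : i ∈ Finset.univ.filter (fun i => α i ≠ 0 ∧ α i ≠ 1) := by
      simp [h.1, h.2]
    have := Finset.card_pos.mpr ⟨i, this⟩
    omega
  | succ n ih =>
    intro α hα hsum hcard
    set F := Finset.univ.filter (fun i => α i ≠ 0 ∧ α i ≠ 1) with hF
    by_cases hFe : F = ∅
    · apply stmt2_base m k α _ hsum
      intro i
      by_contra h
      push_neg at h
      have : i ∈ F := by simp [hF, h.1, h.2]
      simp [hFe] at this
    · obtain ⟨i, hiF⟩ := Finset.nonempty_of_ne_empty hFe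
      have hi : α i ≠ 0 ∧ α i ≠ 1 := by simpa [hF] using hiF
      have hi0 : 0 < α i := lt_of_le_of_ne (hα i).1 (Ne.symm hi.1)
      have hi1 : α i < 1 := lt_of_le_of_ne (hα i).2 hi.2
      -- there must be a second fractional coordinate
      have hj : ∃ j ∈ F, j ≠ i := by
        by_contra h
        push_neg at h
        have hFi : F = {i} := by
          apply Finset.eq_singleton_iff_unique_mem.mpr
          exact ⟨hiF, h⟩
        -- all other coords are 0/1
        set N : ℕ := ((Finset.univ.erase i).filter (fun l => α l = 1)).card with hN
        have hrest : ∑ l ∈ Finset.univ.erase i, α l = N := by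
          rw [hN, Finset.card_filter]
          push_cast
          refine Finset.sum_congr rfl (fun l hl => ?_)
          have hlne : l ≠ i := (Finset.mem_erase.mp hl).1
          have : l ∉ F := by rw [hFi]; simp [hlne]
          simp only [hF, Finset.mem_filter, Finset.mem_univ, true_and] at this
          push_neg at this
          by_cases h0 : α l = 0
          · simp [h0]
          · simp [this h0]
        have hsplit : α i + ∑ l ∈ Finset.univ.erase i, α l = k := by
          rw [← hsum, Finset.add_sum_erase _ _ (Finset.mem_univ i)]
        rw [hrest] at hsplit
        have h1 : (N : ℝ) < k := by linarith
        have h2 : (k : ℝ) < N + 1 := by linarith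
        have h1' : N < k := by exact_mod_cast h1
        have h2' : k < N + 1 := by exact_mod_cast h2
        omega
      obtain ⟨j, hjF, hji⟩ := hj
      have hj' : α j ≠ 0 ∧ α j ≠ 1 := by simpa [hF] using hjF
      have hj0 : 0 < α j := lt_of_le_of_ne (hα j).1 (Ne.symm hj'.1)
      have hj1 : α j < 1 := lt_of_le_of_ne (hα j).2 hj'.2
      set t : ℝ := min (1 - α i) (α j) with ht
      set s : ℝ := min (α i) (1 - α j) with hs
      have ht0 : 0 < t := lt_min (by linarith) hj0
      have hs0 : 0 < s := lt_min hi0 (by linarith)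
      have hst : 0 < s + t := by linarith
      set β : Fin m → ℝ := Function.update (Function.update α j (α j - t)) i (α i + t) with hβ
      set γ : Fin m → ℝ := Function.update (Function.update α j (α j + s)) i (α i - s) with hγ
      have hij : i ≠ j := fun h => hji h.symm
      have hβval : ∀ l, β l = if l = i then α i + t else if l = j then α j - t else α l := by
        intro l; simp [hβ, Function.update_apply]
      have hγval : ∀ l, γ l = if l = i then α i - s else if l = j then α j + s else α l := by
        intro l; simp [hγ, Function.update_apply]
      have hsplitβ : ∀ l, β l = α l + ((if l = i then t else 0) + (if l = j then -t else 0)) := by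
        intro l
        rw [hβval l]
        rcases eq_or_ne l i with rfl | hli
        · simp [hij]
        · rcases eq_or_ne l j with rfl | hlj
          · simp [hli]; ring
          · simp [hli, hlj]
      have hsplitγ : ∀ l, γ l = α l + ((if l = i then -s else 0) + (if l = j then s else 0)) := by
        intro l
        rw [hγval l]
        rcases eq_or_ne l i with rfl | hli
        · simp [hij]; ring
        · rcases eq_or_ne l j with rfl | hlj
          · simp [hli]
          · simp [hli, hlj]
      have htle1 : t ≤ 1 - α i := by rw [ht]; exact min_le_left _ _
      have htle2 : t ≤ α j := by rw [ht]; exact min_le_right _ _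
      have hsle1 : s ≤ α i := by rw [hs]; exact min_le_left _ _
      have hsle2 : s ≤ 1 - α j := by rw [hs]; exact min_le_right _ _
      have hβbd : ∀ l', 0 ≤ β l' ∧ β l' ≤ 1 := by
        intro l'
        rcases eq_or_ne l' i with rfl | hli
        · have hv : β l' = α l' + t := by rw [hβval]; simp
          rw [hv]; constructor <;> linarith
        · rcases eq_or_ne l' j with rfl | hlj
          · have hv : β l' = α l' - t := by rw [hβval]; simp [hli]
            rw [hv]; constructor <;> linarith
          · have hv : β l' = α l' := by rw [hβval]; simp [hli, hlj]
            rw [hv]; exact hα l'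
      have hγbd : ∀ l', 0 ≤ γ l' ∧ γ l' ≤ 1 := by
        intro l'
        rcases eq_or_ne l' i with rfl | hli
        · have hv : γ l' = α l' - s := by rw [hγval]; simp
          rw [hv]; constructor <;> linarith
        · rcases eq_or_ne l' j with rfl | hlj
          · have hv : γ l' = α l' + s := by rw [hγval]; simp [hli]
            rw [hv]; constructor <;> linarith
          · have hv : γ l' = α l' := by rw [hγval]; simp [hli, hlj]
            rw [hv]; exact hα l'
      have hβsum : ∑ l, β l = k := by
        simp only [hsplitβ]
        rw [Finset.sum_add_distrib, Finset.sum_add_distrib, hsum]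
        simp [Finset.sum_ite_eq']
      have hγsum : ∑ l, γ l = k := by
        simp only [hsplitγ]
        rw [Finset.sum_add_distrib, Finset.sum_add_distrib, hsum]
        simp [Finset.sum_ite_eq']
      -- fractional sets shrink
      have hsubβ : Finset.univ.filter (fun l => β l ≠ 0 ∧ β l ≠ 1) ⊆ F := by
        intro l hl
        simp only [Finset.mem_filter, Finset.mem_univ, true_and] at hl
        rcases eq_or_ne l i with rfl | hli
        · exact hiF
        · rcases eq_or_ne l j with rfl | hlj
          · exact hjF
          · have : β l = α l := by rw [hβval l]; simp [hli, hlj]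
            rw [this] at hl
            simp [hF, hl.1, hl.2]
      have hsubγ : Finset.univ.filter (fun l => γ l ≠ 0 ∧ γ l ≠ 1) ⊆ F := by
        intro l hl
        simp only [Finset.mem_filter, Finset.mem_univ, true_and] at hl
        rcases eq_or_ne l i with rfl | hli
        · exact hiF
        · rcases eq_or_ne l j with rfl | hlj
          · exact hjF
          · have : γ l = α l := by rw [hγval l]; simp [hli, hlj]
            rw [this] at hl
            simp [hF, hl.1, hl.2]
      have hβcard : (Finset.univ.filter (fun l => β l ≠ 0 ∧ β l ≠ 1)).card ≤ n := by
        have hnot : ∃ x ∈ F, x ∉ Finset.univ.filter (fun l => β l ≠ 0 ∧ β l ≠ 1) := by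
          rcases min_cases (1 - α i) (α j) with ⟨he, _⟩ | ⟨he, _⟩
          · refine ⟨i, hiF, ?_⟩
            have hv : β i = α i + t := by rw [hβval]; simp
            have : β i = 1 := by rw [hv, ht, he]; ring
            simp [this]
          · refine ⟨j, hjF, ?_⟩
            have hv : β j = α j - t := by rw [hβval]; simp [hij.symm]
            have : β j = 0 := by rw [hv, ht, he]; ring
            simp [this]
        obtain ⟨x, hx1, hx2⟩ := hnot
        have : (Finset.univ.filter (fun l => β l ≠ 0 ∧ β l ≠ 1)).card < F.card :=
          Finset.card_lt_card (Finset.ssubset_iff_of_subset hsubβ |>.mpr ⟨x, hx1, hx2⟩)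
        omega
      have hγcard : (Finset.univ.filter (fun l => γ l ≠ 0 ∧ γ l ≠ 1)).card ≤ n := by
        have hnot : ∃ x ∈ F, x ∉ Finset.univ.filter (fun l => γ l ≠ 0 ∧ γ l ≠ 1) := by
          rcases min_cases (α i) (1 - α j) with ⟨he, _⟩ | ⟨he, _⟩
          · refine ⟨i, hiF, ?_⟩
            have hv : γ i = α i - s := by rw [hγval]; simp
            have : γ i = 0 := by rw [hv, hs, he]; ring
            simp [this]
          · refine ⟨j, hjF, ?_⟩
            have hv : γ j = α j + s := by rw [hγval]; simp [hij.symm]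
            have : γ j = 1 := by rw [hv, hs, he]; ring
            simp [this]
        obtain ⟨x, hx1, hx2⟩ := hnot
        have : (Finset.univ.filter (fun l => γ l ≠ 0 ∧ γ l ≠ 1)).card < F.card :=
          Finset.card_lt_card (Finset.ssubset_iff_of_subset hsubγ |>.mpr ⟨x, hx1, hx2⟩)
        omega
      obtain ⟨pβ, hpβ0, hpβ1, hpβ2⟩ := ih β hβbd hβsum hβcard
      obtain ⟨pγ, hpγ0, hpγ1, hpγ2⟩ := ih γ hγbd hγsum hγcard
      refine ⟨fun T => s / (s + t) * pβ T + t / (s + t) * pγ T, ?_, ?_, ?_⟩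
      · intro T
        have := hpβ0 T
        have := hpγ0 T
        positivity
      · rw [Finset.sum_add_distrib, ← Finset.mul_sum, ← Finset.mul_sum, hpβ1, hpγ1]
        field_simp
      · intro l
        have : ∑ S : {S : Finset (Fin m) // S.card = k},
            (s / (s + t) * pβ S + t / (s + t) * pγ S) * (if l ∈ S.1 then (1:ℝ) else 0)
            = s / (s + t) * β l + t / (s + t) * γ l := by
          rw [← hpβ2 l, ← hpγ2 l, Finset.mul_sum, Finset.mul_sum, ← Finset.sum_add_distrib]
          refine Finset.sum_congr rfl (fun T _ => ?_)
          ring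
        rw [this, hsplitβ l, hsplitγ l]
        rcases eq_or_ne l i with rfl | hli
        · simp only [if_pos rfl, if_neg hij, eq_self_iff_true, if_true]
          field_simp
          ring
        · rcases eq_or_ne l j with rfl | hlj
          · simp only [if_neg hli, if_pos rfl, eq_self_iff_true, if_true]
            field_simp
            ring
          · simp only [if_neg hli, if_neg hlj]
            field_simp
            ring

/-- The combinatorial matrix `M_{[m,k]}` (columns = indicators of `k`-subsets)
maps the probability simplex onto `{α : 0 ≤ α_i ≤ 1, Σ α_i = k}`. -/
theorem stmt_2 (m k : ℕ) (hm : 1 ≤ m) (hk1 : 1 ≤ k) (hk2 : k ≤ m)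
    (α : Fin m → ℝ) (hα : ∀ i, 0 ≤ α i ∧ α i ≤ 1) (hsum : ∑ i, α i = k) :
    ∃ p : {S : Finset (Fin m) // S.card = k} → ℝ,
      (∀ S, 0 ≤ p S) ∧ (∑ S, p S = 1) ∧
      ∀ i, (∑ S : {S : Finset (Fin m) // S.card = k},
        p S * (if i ∈ S.1 then (1 : ℝ) else 0)) = α i := by
  exact stmt2_aux m k m α hα hsum (le_trans (Finset.card_le_card (Finset.filter_subset _ _)) (by simp))
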